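/- Let b ≥ 2, let k ≥ 1, and let m_0 be an integer with 1 ≤ m_0 < b^k and b ∤ m_0; put d = b^k/gcd(m_0, b^k) and C_d = {m : 1 ≤ m < b^k, b ∤ m, b^k/gcd(m, b^k) = d}. Then: (a) the set of integers e > 1 such that Φ_e(X) divides Φ_d(X^b) in ℤ[X] equals the set {b^{k+1}/gcd(ℓb^k + m_0, b^{k+1}) : 0 ≤ ℓ ≤ b−1}; and (b) Φ_d(X^b) = ∏_{m ∈ C_d} ∏_{ℓ=0}^{b−1} (X − e^{2πi(ℓb^k + m)/b^{k+1}}) in ℂ[X]. -/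

import Mathlib

open Polynomial

private lemma gcd_eq_of_modEq {a c n : ℕ} (h : a ≡ c [MOD n]) : Nat.gcd a n = Nat.gcd c n := by
  rw [Nat.gcd_comm a n, Nat.gcd_comm c n, Nat.gcd_rec n a, Nat.gcd_rec n c, h]

private lemma prim_pow_gcd {ζ : ℂ} {N : ℕ} (hN : 0 < N) (h : IsPrimitiveRoot ζ N)
    {n : ℕ} (hn : 0 < n) : IsPrimitiveRoot (ζ ^ n) (N / Nat.gcd n N) := by
  have hc : 0 < Nat.gcd n N := Nat.gcd_pos_of_pos_left N hn
  have h1 : N = Nat.gcd n N * (N / Nat.gcd n N) := (Nat.mul_div_cancel' (Nat.gcd_dvd_right n N)).symm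
  have h2 := h.pow hN h1
  have h3 : Nat.Coprime (n / Nat.gcd n N) (N / Nat.gcd n N) := Nat.coprime_div_gcd_div_gcd hc
  have h4 := h2.pow_of_coprime _ h3
  rwa [← pow_mul, Nat.mul_div_cancel' (Nat.gcd_dvd_left n N)] at h4

private lemma crt_exists {d m₁ b s : ℕ} (hb : 0 < b) (hm : Nat.Coprime m₁ d)
    (hs : s ∣ b) (hds : Nat.Coprime d s) : ∃ ℓ, ℓ < b ∧ Nat.gcd (ℓ * d + m₁) b = s := by
  obtain ⟨u, hu⟩ := hs
  have hu0 : 0 < u := by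
    rcases Nat.eq_zero_or_pos u with h | h
    · subst h; simp at hu; omega
    · exact h
  have hrd : Nat.gcd d b ∣ d := Nat.gcd_dvd_left d b
  have hrb : Nat.gcd d b ∣ b := Nat.gcd_dvd_right d b
  set r := Nat.gcd d b with hr
  have hrs : Nat.Coprime r s := Nat.Coprime.coprime_dvd_left hrd hds
  have hru : r ∣ u := hrs.dvd_of_dvd_mul_left (hu ▸ hrb)
  have hm₁r : Nat.Coprime m₁ r := Nat.Coprime.coprime_dvd_right hrd hm
  have hsr : Nat.Coprime s r := hrs.symm
  haveI : NeZero u := ⟨hu0.ne'⟩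
  haveI : NeZero b := ⟨hb.ne'⟩
  obtain ⟨Y, hY⟩ := ZMod.unitsMap_surjective hru
      ((ZMod.unitOfCoprime m₁ hm₁r) * (ZMod.unitOfCoprime s hsr)⁻¹)
  set y := ((Y : ZMod u).val : ℕ) with hy
  have hyu : Nat.Coprime y u := ZMod.val_coe_unit_coprime Y
  have hycast : ((y : ℕ) : ZMod r) =
      ((ZMod.unitOfCoprime m₁ hm₁r) * (ZMod.unitOfCoprime s hsr)⁻¹ : (ZMod r)ˣ) := by
    have := congrArg (Units.val) hY
    rw [ZMod.unitsMap_def] at this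
    simpa [hy, ZMod.natCast_val] using this
  have hmod : y * s ≡ m₁ [MOD r] := by
    rw [← ZMod.natCast_eq_natCast_iff]
    push_cast
    rw [hycast]
    push_cast
    rw [mul_assoc]
    rw [show ((((ZMod.unitOfCoprime s hsr)⁻¹ : (ZMod r)ˣ) : ZMod r) * (s : ZMod r)) = 1 by
      rw [← ZMod.coe_unitOfCoprime s hsr, ← Units.val_mul, inv_mul_cancel, Units.val_one]]
    rw [mul_one, ZMod.coe_unitOfCoprime]
  obtain ⟨t, ht⟩ := (Nat.modEq_iff_dvd).mp hmod
  have hbez : ((r : ℕ) : ℤ) = d * Nat.gcdA d b + b * Nat.gcdB d b := Nat.gcd_eq_gcd_ab d b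
  set ξ : ZMod b := ((-(t * Nat.gcdA d b) : ℤ) : ZMod b) with hξ
  refine ⟨ξ.val, ZMod.val_lt ξ, ?_⟩
  have hmod2 : ξ.val * d + m₁ ≡ y * s [MOD b] := by
    have key : ((-(t * Nat.gcdA d b) * d + m₁ - y * s : ℤ) : ZMod b) = 0 := by
      rw [ZMod.intCast_zmod_eq_zero_iff_dvd]
      exact ⟨t * Nat.gcdB d b, by push_cast at ht ⊢; linear_combination ht + t * hbez⟩
    rw [← ZMod.natCast_eq_natCast_iff]
    push_cast at key ⊢
    rw [ZMod.natCast_val, ZMod.cast_id, hξ]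
    push_cast
    linear_combination key
  rw [gcd_eq_of_modEq hmod2, mul_comm y s, hu, Nat.gcd_mul_left]
  rw [Nat.Coprime] at hyu
  rw [hyu, mul_one]

private lemma char_iff {b d m₁ : ℕ} (hb : 0 < b) (hd1 : 1 < d) (hm : Nat.Coprime m₁ d) (e : ℕ) :
    (1 < e ∧ e = d * Nat.gcd b e) ↔
      ∃ ℓ, ℓ < b ∧ e = d * b / Nat.gcd (ℓ * d + m₁) b := by
  constructor
  · rintro ⟨he1, heq⟩
    set u := Nat.gcd b e with hudef
    have hub : u ∣ b := Nat.gcd_dvd_left b e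
    have hu0 : 0 < u := Nat.gcd_pos_of_pos_left e hb
    obtain ⟨s, hbsu⟩ := hub
    have hs0 : 0 < s := Nat.pos_of_ne_zero (by rintro rfl; simp at hbsu; omega)
    have hsd : Nat.Coprime s d := by
      have h1 : u = u * Nat.gcd s d := by
        conv_lhs => rw [hudef, hbsu, heq, mul_comm d u, Nat.gcd_mul_left]
      exact Nat.eq_of_mul_eq_mul_left hu0 (h1.symm.trans (mul_one u).symm)
    have hsb : s ∣ b := Dvd.intro_left u hbsu.symm
    obtain ⟨ℓ, hℓ, hgcd⟩ := crt_exists hb hm hsb hsd.symm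
    refine ⟨ℓ, hℓ, ?_⟩
    rw [hgcd, hbsu, heq]
    rw [show u * s = s * u by ring, show d * (s * u) = s * (d * u) by ring,
      Nat.mul_div_cancel_left _ hs0, mul_comm d u]
  · rintro ⟨ℓ, hℓ, he⟩
    set s := Nat.gcd (ℓ * d + m₁) b with hsdef
    have hsb : s ∣ b := Nat.gcd_dvd_right _ _
    have hs0 : 0 < s := Nat.gcd_pos_of_pos_right _ hb
    have hsd : Nat.Coprime s d := by
      have h1 : Nat.gcd (ℓ * d + m₁) d = 1 := by
        rw [add_comm, Nat.gcd_add_mul_right_left]; exact hm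
      have h2 : Nat.gcd s d ∣ 1 := h1 ▸ Nat.dvd_gcd
        ((Nat.gcd_dvd_left s d).trans (Nat.gcd_dvd_left _ b)) (Nat.gcd_dvd_right s d)
      exact Nat.dvd_one.mp h2
    obtain ⟨u, hbsu⟩ := hsb
    have hu0 : 0 < u := Nat.pos_of_ne_zero (by rintro rfl; simp at hbsu; omega)
    have heu : e = d * u := by
      rw [he, hbsu, show d * (s * u) = s * (d * u) by ring, Nat.mul_div_cancel_left _ hs0]
    have hgbe : Nat.gcd b e = u := by
      rw [heu, hbsu, show s * u = u * s by ring, show d * u = u * d by ring,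
        Nat.gcd_mul_left, hsd, mul_one]
    exact ⟨by nlinarith, by rw [hgbe, heu]⟩

private lemma dvd_iff_ord {b d e : ℕ} (hb : 0 < b) (hd1 : 1 < d) (he1 : 1 < e) :
    cyclotomic e ℤ ∣ (cyclotomic d ℤ).comp (X ^ b) ↔ e = d * Nat.gcd b e := by
  have he0 : 0 < e := by omega
  set ξ : ℂ := Complex.exp (2 * Real.pi * Complex.I / e) with hξdef
  have hξ : IsPrimitiveRoot ξ e := Complex.isPrimitiveRoot_exp e he0.ne'
  have hpow : IsPrimitiveRoot (ξ ^ b) (e / Nat.gcd b e) := prim_pow_gcd he0 hξ hb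
  have hgcd0 : 0 < Nat.gcd b e := Nat.gcd_pos_of_pos_left e hb
  have hge : Nat.gcd b e ∣ e := Nat.gcd_dvd_right b e
  haveI : NeZero ((d : ℂ)) := ⟨Nat.cast_ne_zero.mpr (by omega)⟩
  constructor
  · intro hdvd
    have h2 : cyclotomic e ℂ ∣ (cyclotomic d ℂ).comp (X ^ b) := by
      have h3 := Polynomial.map_dvd (Int.castRingHom ℂ) hdvd
      rwa [map_cyclotomic, Polynomial.map_comp, map_cyclotomic, Polynomial.map_pow,
        Polynomial.map_X] at h3
    obtain ⟨q, hq⟩ := h2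
    have hroot : ((cyclotomic d ℂ).comp (X ^ b)).IsRoot ξ := by
      have h3 : (cyclotomic e ℂ).IsRoot ξ := hξ.isRoot_cyclotomic he0
      rw [IsRoot, hq, eval_mul, h3.eq_zero, zero_mul]
    rw [IsRoot, eval_comp, eval_pow, eval_X] at hroot
    have hprim : IsPrimitiveRoot (ξ ^ b) d := (Polynomial.isRoot_cyclotomic_iff).mp hroot
    have h4 := hpow.unique hprim
    rw [← h4, Nat.div_mul_cancel hge]
  · intro heq
    have hdgcd : e / Nat.gcd b e = d := by
      nth_rewrite 1 [heq]
      exact Nat.mul_div_cancel _ hgcd0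
    have hprim : IsPrimitiveRoot (ξ ^ b) d := hdgcd ▸ hpow
    rw [← Polynomial.map_dvd_map (Int.castRingHom ℚ) Int.cast_injective (cyclotomic.monic e ℤ),
      Polynomial.map_comp, map_cyclotomic, map_cyclotomic, Polynomial.map_pow, Polynomial.map_X,
      cyclotomic_eq_minpoly_rat hξ he0]
    apply minpoly.dvd
    rw [Polynomial.aeval_comp]
    have h5 : (Polynomial.aeval ξ) (X ^ b : ℚ[X]) = ξ ^ b := by simp
    rw [h5, Polynomial.aeval_def, ← Polynomial.eval_map, map_cyclotomic]
    exact (hprim.isRoot_cyclotomic (by omega)).eq_zero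

/-- (a) The integers `e > 1` with `Φ_e(X) ∣ Φ_d(X^b)` are exactly the values
`b^{k+1}/gcd(ℓb^k + m₀, b^{k+1})` for `0 ≤ ℓ ≤ b-1`; (b) `Φ_d(X^b)` factors in `ℂ[X]` as the
product of `X - e^{2πi(ℓb^k + m)/b^{k+1}}` over `m ∈ C_d` and `0 ≤ ℓ ≤ b-1`. -/
theorem stmt13 (b k m₀ : ℕ) (hb : 2 ≤ b) (hk : 1 ≤ k)
    (hm₀ : 1 ≤ m₀) (hm₀' : m₀ < b ^ k) (hbm₀ : ¬ b ∣ m₀)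
    (d : ℕ) (hd : d = b ^ k / Nat.gcd m₀ (b ^ k)) :
    (∀ e : ℕ, (1 < e ∧ cyclotomic e ℤ ∣ (cyclotomic d ℤ).comp (X ^ b)) ↔
      ∃ ℓ : ℕ, ℓ < b ∧ e = b ^ (k + 1) / Nat.gcd (ℓ * b ^ k + m₀) (b ^ (k + 1))) ∧
    (cyclotomic d ℂ).comp (X ^ b) =
      ∏ m ∈ (Finset.Ico 1 (b ^ k)).filter
        (fun m => ¬ b ∣ m ∧ b ^ k / Nat.gcd m (b ^ k) = d),
        ∏ ℓ ∈ Finset.range b,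
          (X - Polynomial.C (Complex.exp
            (2 * Real.pi * Complex.I * ((ℓ * b ^ k + m : ℕ) : ℂ) / (b : ℂ) ^ (k + 1)))) := by
  have hb0 : 0 < b := by omega
  have hk0 : k ≠ 0 := by omega
  have hB0 : 0 < b ^ k := pow_pos hb0 k
  have hgm : Nat.gcd m₀ (b ^ k) ∣ m₀ := Nat.gcd_dvd_left _ _
  have hgB : Nat.gcd m₀ (b ^ k) ∣ b ^ k := Nat.gcd_dvd_right _ _
  have hg0 : 0 < Nat.gcd m₀ (b ^ k) := Nat.gcd_pos_of_pos_left _ (by omega)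
  set g := Nat.gcd m₀ (b ^ k) with hg
  set m₁ := m₀ / g with hm₁
  have hm01 : m₀ = g * m₁ := (Nat.mul_div_cancel' hgm).symm
  have hdg : b ^ k = g * d := by rw [hd, Nat.mul_div_cancel' hgB]
  have hcop : Nat.Coprime m₁ d := by
    rw [hm₁, hd]; exact Nat.coprime_div_gcd_div_gcd hg0
  have hbB : b ∣ b ^ k := dvd_pow_self b hk0
  have hgle : g ≤ m₀ := Nat.le_of_dvd (by omega) hgm
  have hd1 : 1 < d := by
    by_contra h
    push_neg at h
    interval_cases d
    · simp at hdg; omega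
    · simp at hdg; omega
  have hNk : b ^ (k + 1) = g * (d * b) := by
    rw [pow_succ, hdg, mul_assoc]
  have bridge : ∀ ℓ : ℕ, Nat.gcd (ℓ * b ^ k + m₀) (b ^ (k + 1))
      = g * Nat.gcd (ℓ * d + m₁) b := by
    intro ℓ
    have h1 : ℓ * b ^ k + m₀ = g * (ℓ * d + m₁) := by rw [hdg, hm01]; ring
    rw [h1, hNk, Nat.gcd_mul_left]
    congr 1
    apply Nat.dvd_antisymm
    · have hA : Nat.gcd (ℓ * d + m₁) d = 1 := by
        rw [add_comm, Nat.gcd_add_mul_right_left]; exact hcop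
      have hco : Nat.Coprime (Nat.gcd (ℓ * d + m₁) (d * b)) d :=
        Nat.dvd_one.mp (hA ▸ Nat.dvd_gcd
          ((Nat.gcd_dvd_left _ d).trans (Nat.gcd_dvd_left _ (d * b)))
          (Nat.gcd_dvd_right _ d))
      exact Nat.dvd_gcd (Nat.gcd_dvd_left _ _)
        (hco.dvd_of_dvd_mul_left (Nat.gcd_dvd_right _ _))
    · exact Nat.dvd_gcd (Nat.gcd_dvd_left _ _)
        ((Nat.gcd_dvd_right _ _).trans (dvd_mul_left b d))
  have divbridge : ∀ ℓ : ℕ, b ^ (k + 1) / Nat.gcd (ℓ * b ^ k + m₀) (b ^ (k + 1))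
      = d * b / Nat.gcd (ℓ * d + m₁) b := by
    intro ℓ
    rw [bridge ℓ, hNk, Nat.mul_div_mul_left _ _ hg0]
  constructor
  · intro e
    constructor
    · rintro ⟨he1, hdvd⟩
      obtain ⟨ℓ, hℓ, he⟩ := (char_iff hb0 hd1 hcop e).mp
        ⟨he1, (dvd_iff_ord hb0 hd1 he1).mp hdvd⟩
      exact ⟨ℓ, hℓ, by rw [divbridge ℓ]; exact he⟩
    · rintro ⟨ℓ, hℓ, he⟩
      have hchar := (char_iff hb0 hd1 hcop e).mpr ⟨ℓ, hℓ, by rw [← divbridge ℓ]; exact he⟩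
      exact ⟨hchar.1, (dvd_iff_ord hb0 hd1 hchar.1).mpr hchar.2⟩
  · -- part (b)
    set N := b ^ (k + 1) with hN
    have hN0 : 0 < N := pow_pos hb0 _
    set ζ : ℂ := Complex.exp (2 * Real.pi * Complex.I / N) with hζdef
    have hζ : IsPrimitiveRoot ζ N := Complex.isPrimitiveRoot_exp N hN0.ne'
    have hNb : N = b * b ^ k := by rw [hN, pow_succ, mul_comm]
    set S := (Finset.Ico 1 (b ^ k)).filter
        (fun m => ¬ b ∣ m ∧ b ^ k / Nat.gcd m (b ^ k) = d) with hS
    have hSeq : S = (Finset.range (b ^ k)).filter (fun m => Nat.gcd (b ^ k) m = g) := by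
      ext m
      simp only [hS, Finset.mem_filter, Finset.mem_Ico, Finset.mem_range]
      constructor
      · rintro ⟨⟨h1, h2⟩, h3, h4⟩
        refine ⟨h2, ?_⟩
        have hgd : Nat.gcd m (b ^ k) ∣ b ^ k := Nat.gcd_dvd_right m (b ^ k)
        have h5 : Nat.gcd m (b ^ k) * d = g * d := by
          conv_lhs => rw [← h4, Nat.mul_div_cancel' hgd]
          exact hdg
        rw [Nat.gcd_comm]
        exact Nat.eq_of_mul_eq_mul_right (by omega) h5
      · rintro ⟨h1, h2⟩
        have hm0 : 1 ≤ m := by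
          rcases Nat.eq_zero_or_pos m with rfl | h
          · rw [Nat.gcd_zero_right] at h2; omega
          · exact h
        have hbm : ¬ b ∣ m := by
          intro hbm
          exact hbm₀ ((h2 ▸ Nat.dvd_gcd hbB hbm).trans hgm)
        refine ⟨⟨hm0, h1⟩, hbm, ?_⟩
        rw [Nat.gcd_comm, h2, hd]
    have hcardS : S.card = Nat.totient d := by
      rw [hSeq, hd]
      exact (Nat.totient_div_of_dvd hgB).symm
    have hP : ((cyclotomic d ℂ).comp (X ^ b)).Monic :=
      (cyclotomic.monic d ℂ).comp (monic_X_pow b) (by rw [natDegree_X_pow]; omega)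
    have hdeg : ((cyclotomic d ℂ).comp (X ^ b)).natDegree = Nat.totient d * b := by
      rw [natDegree_comp, natDegree_cyclotomic, natDegree_X_pow]
    have hsplits : Splits ((cyclotomic d ℂ).comp (X ^ b)) :=
      IsAlgClosed.splits _
    have hcard : Multiset.card ((cyclotomic d ℂ).comp (X ^ b)).roots = Nat.totient d * b := by
      rw [← hdeg]
      exact (Polynomial.splits_iff_card_roots.mp hsplits)
    set T := S ×ˢ Finset.range b with hT
    set f : ℕ × ℕ → ℂ := fun p => ζ ^ (p.2 * b ^ k + p.1) with hf
    have hlt : ∀ p ∈ T, p.2 * b ^ k + p.1 < N := by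
      intro p hp
      obtain ⟨hp1, hp2⟩ := Finset.mem_product.mp hp
      simp only [hS, Finset.mem_filter, Finset.mem_Ico] at hp1
      have h1 : p.2 * b ^ k + p.1 < p.2 * b ^ k + b ^ k := by omega
      have h2 : (p.2 + 1) * b ^ k ≤ b * b ^ k :=
        Nat.mul_le_mul_right _ (by have := Finset.mem_range.mp hp2; omega)
      rw [Nat.succ_mul] at h2
      omega
    have hmemroots : ∀ p ∈ T, f p ∈ ((cyclotomic d ℂ).comp (X ^ b)).roots := by
      intro p hp
      obtain ⟨hp1, hp2⟩ := Finset.mem_product.mp hp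
      simp only [hS, Finset.mem_filter, Finset.mem_Ico] at hp1
      rw [Polynomial.mem_roots hP.ne_zero, IsRoot, eval_comp, eval_pow, eval_X]
      have hzb : IsPrimitiveRoot (ζ ^ b) (b ^ k) := hζ.pow hN0 hNb
      have hprim : IsPrimitiveRoot ((ζ ^ b) ^ p.1) d := by
        have := prim_pow_gcd hB0 hzb (show 0 < p.1 by omega)
        rwa [hp1.2.2] at this
      have hpoweq : (f p) ^ b = (ζ ^ b) ^ p.1 := by
        rw [hf]
        simp only
        rw [← pow_mul, ← pow_mul]
        have h6 : (p.2 * b ^ k + p.1) * b = N * p.2 + b * p.1 := by rw [hNb]; ring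
        rw [h6, pow_add, pow_mul, hζ.pow_eq_one, one_pow, one_mul]
      rw [hpoweq]
      exact (hprim.isRoot_cyclotomic (by omega)).eq_zero
    have hinj : ∀ p ∈ T.val, ∀ q ∈ T.val, f p = f q → p = q := by
      intro p hp q hq hfe
      rw [Finset.mem_val] at hp hq
      have hltp := hlt p hp
      have hltq := hlt q hq
      obtain ⟨hp1, hp2⟩ := Finset.mem_product.mp hp
      obtain ⟨hq1, hq2⟩ := Finset.mem_product.mp hq
      simp only [hS, Finset.mem_filter, Finset.mem_Ico] at hp1 hq1
      have heq : p.2 * b ^ k + p.1 = q.2 * b ^ k + q.1 := hζ.pow_inj hltp hltq hfe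
      rw [mul_comm p.2, mul_comm q.2] at heq
      have e1 : p.1 = q.1 := by
        have h1 := congrArg (fun x => x % b ^ k) heq
        simpa [Nat.mul_add_mod, Nat.mod_eq_of_lt hp1.1.2, Nat.mod_eq_of_lt hq1.1.2] using h1
      rw [e1] at heq
      have e2 : p.2 = q.2 := Nat.eq_of_mul_eq_mul_left hB0 (Nat.add_right_cancel heq)
      exact Prod.ext e1 e2
    have hnodup : (T.val.map f).Nodup := Multiset.Nodup.map_on hinj T.nodup
    have hM : T.val.map f ≤ ((cyclotomic d ℂ).comp (X ^ b)).roots := by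
      rw [Multiset.le_iff_subset hnodup]
      intro x hx
      obtain ⟨p, hp, rfl⟩ := Multiset.mem_map.mp hx
      exact hmemroots p (Finset.mem_val.mp hp)
    have hMeq : T.val.map f = ((cyclotomic d ℂ).comp (X ^ b)).roots := by
      apply Multiset.eq_of_le_of_card_le hM
      rw [Multiset.card_map, hcard]
      have : Multiset.card T.val = S.card * b := by
        rw [show Multiset.card T.val = T.card from rfl, hT, Finset.card_product,
          Finset.card_range]
      rw [this, hcardS]
    calc (cyclotomic d ℂ).comp (X ^ b)
        = (((cyclotomic d ℂ).comp (X ^ b)).roots.map (fun a => X - C a)).prod :=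
          hsplits.eq_prod_roots_of_monic hP
      _ = ((T.val.map f).map (fun a => X - C a)).prod := by rw [hMeq]
      _ = (T.val.map (fun p => X - C (f p))).prod := by rw [Multiset.map_map]; rfl
      _ = ∏ p ∈ T, (X - C (f p)) := (Finset.prod_eq_multiset_prod T _).symm
      _ = ∏ m ∈ S, ∏ ℓ ∈ Finset.range b, (X - C (f (m, ℓ))) := by
          rw [hT]; exact Finset.prod_product S (Finset.range b) _
      _ = _ := by
          apply Finset.prod_congr rfl
          intro m _
          apply Finset.prod_congr rfl
          intro ℓ _
          congr 2
          rw [hf]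
          simp only
          rw [hζdef, ← Complex.exp_nat_mul]
          congr 1
          rw [show ((b : ℂ)) ^ (k + 1) = ((N : ℕ) : ℂ) by rw [hN]; push_cast; ring]
          push_cast
          ring
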